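/- Let X be a nonempty set and p a partial metric on X. If a sequence {x_n} in (X,p) is statistically convergent to x (i.e., for every ε > 0, d({n ∈ ℕ : |p(x_n,x) − p(x,x)| ≥ ε}) = 0), then for every r ≥ 0 the set {y ∈ X : p(x,y) ≤ p(x,x) + r and p(y,y) = p(x,x)} is contained in st-LIM^r x_n; that is, every point y of the closed ball of radius r centered at x whose self-distance equals that of x is a rough statistical limit point of {x_n} of roughness degree r. -/

import Mathlib

/-- A partial metric on a set `X`. -/
structure IsPartialMetric {X : Type*} (p : X → X → ℝ) : Prop where
  nonneg : ∀ x y : X, 0 ≤ p x y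
  self_le : ∀ x y : X, p x x ≤ p x y
  eq_iff : ∀ x y : X, x = y ↔ p x x = p x y ∧ p x y = p y y
  symm : ∀ x y : X, p x y = p y x
  triangle : ∀ x y z : X, p x y ≤ p x z + p z y - p z z

open Classical in
/-- `A ⊆ ℕ` has natural density `d`. -/
def HasNatDensity (A : Set ℕ) (d : ℝ) : Prop :=
  Filter.Tendsto
    (fun n : ℕ => (((Finset.range n).filter (fun k => k ∈ A)).card : ℝ) / (n : ℝ))
    Filter.atTop (nhds d)

/-- `l` is a rough statistical limit point of the sequence `x` with roughness degree `r`,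
i.e. `l ∈ st-LIM^r x_n`. -/
def RStatLimit {X : Type*} (p : X → X → ℝ) (x : ℕ → X) (r : ℝ) (l : X) : Prop :=
  ∀ ε : ℝ, 0 < ε → HasNatDensity {n : ℕ | r + ε ≤ |p (x n) l - p l l|} 0

open Classical in
lemma hasNatDensity_zero_of_subset {A B : Set ℕ} (hAB : A ⊆ B)
    (hB : HasNatDensity B 0) : HasNatDensity A 0 := by
  apply squeeze_zero (fun n => by positivity) (g := fun n : ℕ =>
    (((Finset.range n).filter (fun k => k ∈ B)).card : ℝ) / (n : ℝ)) ?_ hB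
  intro n
  rcases Nat.eq_zero_or_pos n with rfl | hn
  · simp
  · apply div_le_div_of_nonneg_right ?_ (Nat.cast_nonneg n)
    exact_mod_cast Finset.card_le_card
      (Finset.monotone_filter_right _ (fun k _ hk => hAB hk))

/-- If `x_n` statistically converges to `x`, then every point `y` of the closed ball of
radius `r` centered at `x` with `p y y = p x x` belongs to `st-LIM^r x_n`. -/
theorem closedBall_subset_rStatLimit
    {X : Type*} [Nonempty X] (p : X → X → ℝ) (hp : IsPartialMetric p)
    (x : ℕ → X) (l : X)
    (h : ∀ ε : ℝ, 0 < ε → HasNatDensity {n : ℕ | ε ≤ |p (x n) l - p l l|} 0)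
    (r : ℝ) (hr : 0 ≤ r) :
    {y : X | p l y ≤ p l l + r ∧ p y y = p l l} ⊆ {y : X | RStatLimit p x r y} := by
  rintro y ⟨hball, hself⟩ ε hε
  refine hasNatDensity_zero_of_subset ?_ (h ε hε)
  intro n hn
  simp only [Set.mem_setOf_eq] at hn ⊢
  have h1 : p y y ≤ p (x n) y := (hp.symm y (x n)) ▸ hp.self_le y (x n)
  have h2 : p l l ≤ p (x n) l := (hp.symm l (x n)) ▸ hp.self_le l (x n)
  have htri : p (x n) y ≤ p (x n) l + p l y - p l l := hp.triangle (x n) y l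
  rw [abs_of_nonneg (by linarith)] at hn
  rw [abs_of_nonneg (by linarith)]
  linarith
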